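/- For all integers p ≥ 1 and Δ ≥ 1 and every finite simple graph G with maximum degree at most Δ, arb(G^p) ≤ 2^{p+1} · arb(G)^{⌈p/2⌉} · Δ^{⌊p/2⌋}. -/

import Mathlib

/-- The `p`-th power of a graph: vertices are adjacent iff distinct and at distance at most `p`. -/
def graphPow {V : Type*} (G : SimpleGraph V) (p : ℕ) : SimpleGraph V where
  Adj x y := x ≠ y ∧ G.Reachable x y ∧ G.dist x y ≤ p
  symm := by
    constructor
    rintro x y ⟨hxy, hr, hd⟩
    exact ⟨hxy.symm, hr.symm, by rwa [SimpleGraph.dist_comm]⟩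
  loopless := by constructor; rintro x ⟨h, -⟩; exact h rfl

/-- Maximum average degree: max over nonempty subgraphs of 2|E(H)|/|V(H)|. -/
noncomputable def mad {V : Type*} (G : SimpleGraph V) : ℝ :=
  sSup { x : ℝ | ∃ H : G.Subgraph, H.verts.Nonempty ∧
    x = 2 * H.edgeSet.ncard / H.verts.ncard }

/-- Coloring number: min over linear orders (injections into ℕ) of max back-closed-neighborhood size. -/
noncomputable def col {V : Type*} [Fintype V] (G : SimpleGraph V) : ℕ :=
  sInf { n : ℕ | ∃ σ : V ↪ ℕ,
    ∀ x : V, ({ y : V | σ y ≤ σ x ∧ (y = x ∨ G.Adj x y) }).ncard ≤ n }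

/-- Weak `k`-coloring number. -/
noncomputable def wcol {V : Type*} [Fintype V] (G : SimpleGraph V) (k : ℕ) : ℕ :=
  sInf { n : ℕ | ∃ σ : V ↪ ℕ, ∀ x : V,
    ({ y : V | σ y ≤ σ x ∧ ∃ P : G.Walk x y, P.length ≤ k ∧
        ∀ z ∈ P.support, σ y ≤ σ z }).ncard ≤ n }

/-- Arboricity: the minimum number of forests needed to cover all edges of `G`. -/
noncomputable def arb {V : Type*} (G : SimpleGraph V) : ℕ :=
  sInf { n : ℕ | ∃ f : Fin n → SimpleGraph V, (∀ i, (f i).IsAcyclic ∧ f i ≤ G) ∧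
    ∀ e ∈ G.edgeSet, ∃ i, e ∈ (f i).edgeSet }

/-- Out-weight of a vertex under a weighting of edge orientations. -/
def outWeight {V : Type*} [Fintype V] (G : SimpleGraph V) [DecidableRel G.Adj]
    (w : V → V → ℝ) (u : V) : ℝ :=
  ∑ v ∈ G.neighborFinset u, w u v

/-- `w` is a weak orientation of `G`. -/
def IsWeakOrientation {V : Type*} (G : SimpleGraph V) (w : V → V → ℝ) : Prop :=
  ∀ u v, G.Adj u v → 0 ≤ w u v ∧ w u v + w v u = 1

/-- Maximum out-weight. -/
noncomputable def maxOutWeight {V : Type*} [Fintype V] [Nonempty V] (G : SimpleGraph V)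
    [DecidableRel G.Adj] (w : V → V → ℝ) : ℝ :=
  Finset.univ.sup' Finset.univ_nonempty (outWeight G w)


set_option linter.unusedSectionVars false
set_option linter.unusedVariables false
set_option maxHeartbeats 1000000

open SimpleGraph Finset
open scoped Classical

namespace Arb12
variable {V : Type*}
lemma cycle_two_nbrs {H : SimpleGraph V} {u m : V} {c : H.Walk u u} (hc : c.IsCycle)
    (hm : m ∈ c.support) : ∃ b d : V, b ≠ d ∧ H.Adj m b ∧ H.Adj m d := by
  classical
  set c' : H.Walk m m := c.rotate m hm with hc'def
  have hc' : c'.IsCycle := hc.rotate hm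
  have hlen : 3 ≤ c'.length := hc'.three_le_length
  obtain ⟨b, hadj, q, heq⟩ := Walk.not_nil_iff.mp hc'.not_nil
  have hqlen : 0 < q.length := by
    have := hlen; rw [heq] at this; simp [Walk.length_cons] at this; omega
  have hqrev : ¬ q.reverse.Nil := by
    rw [Walk.not_nil_iff_lt_length]; simpa using hqlen
  obtain ⟨d, hadj2, q2, heq2⟩ := Walk.not_nil_iff.mp hqrev
  have hmem : s(m, d) ∈ q.edges := by
    have : s(m, d) ∈ q.reverse.edges := by rw [heq2]; simp
    rwa [Walk.edges_reverse, List.mem_reverse] at this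
  refine ⟨b, d, ?_, hadj, hadj2⟩
  rintro rfl
  have hnodup : c'.edges.Nodup := hc'.edges_nodup
  rw [heq] at hnodup
  simp only [Walk.edges_cons, List.nodup_cons] at hnodup
  exact hnodup.1 hmem

lemma isAcyclic_sup_pendant {F : SimpleGraph V} (hF : F.IsAcyclic) {x v : V} (hxv : x ≠ v)
    (hx : ∀ w, ¬ F.Adj x w) : (F ⊔ SimpleGraph.fromEdgeSet {s(x, v)}).IsAcyclic := by
  classical
  intro w c hc
  have hadj_char : ∀ y, (F ⊔ SimpleGraph.fromEdgeSet {s(x, v)}).Adj x y → y = v := by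
    intro y hy
    rcases hy with hy | hy
    · exact absurd hy (hx y)
    · rw [fromEdgeSet_adj] at hy
      obtain ⟨h1, h2⟩ := hy
      rw [Set.mem_singleton_iff, Sym2.eq_iff] at h1
      rcases h1 with ⟨-, rfl⟩ | ⟨rfl, rfl⟩
      · rfl
      · exact absurd rfl h2
  by_cases hxs : x ∈ c.support
  · obtain ⟨b, d, hbd, hb, hd⟩ := cycle_two_nbrs hc hxs
    exact hbd ((hadj_char b hb).trans (hadj_char d hd).symm)
  · have hedges : ∀ e ∈ c.edges, e ∈ F.edgeSet := by
      intro e he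
      have := Walk.edges_subset_edgeSet c he
      rw [edgeSet_sup] at this
      rcases this with h | h
      · exact h
      · exfalso
        rw [edgeSet_fromEdgeSet] at h
        obtain ⟨h1, -⟩ := h
        rw [Set.mem_singleton_iff] at h1
        subst h1
        exact hxs (c.fst_mem_support_of_mem_edges he)
    exact hF (c.transfer F hedges) (hc.transfer hedges)


lemma forests_of_elim [Fintype V] (H : SimpleGraph V) (k : ℕ)
    (hk : ∀ S : Finset V, S.Nonempty → ∃ x ∈ S, (S.filter (fun y => H.Adj x y)).card ≤ k) :
    ∀ (n : ℕ) (S : Finset V), S.card ≤ n → ∃ f : Fin k → SimpleGraph V,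
      (∀ i, (f i).IsAcyclic ∧ f i ≤ H) ∧
      (∀ u v, H.Adj u v → u ∈ S → v ∈ S → ∃ i, (f i).Adj u v) ∧
      (∀ i u v, (f i).Adj u v → u ∈ S ∧ v ∈ S) := by
  classical
  intro n
  induction n with
  | zero =>
    intro S hS
    rw [Nat.le_zero, Finset.card_eq_zero] at hS
    subst hS
    exact ⟨fun _ => ⊥, fun i => ⟨fun _ c hc => hc.ne_bot rfl, bot_le⟩,
      fun u v _ hu => absurd hu (by simp), fun i u v h => absurd h (by simp)⟩
  | succ n ih =>
    intro S hS
    rcases S.eq_empty_or_nonempty with rfl | hSne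
    · exact ih ∅ (by simp)
    obtain ⟨x, hxS, hxdeg⟩ := hk S hSne
    set S' := S.erase x with hS'def
    obtain ⟨f', hf'1, hf'2, hf'3⟩ := ih S' (by
      show (S.erase x).card ≤ n
      have h1 := Finset.card_erase_of_mem hxS
      have h2 := Finset.card_pos.mpr hSne
      omega)
    set N : Finset V := S'.filter (fun y => H.Adj x y) with hNdef
    have hNcard : N.card ≤ k := by
      refine le_trans (Finset.card_le_card ?_) hxdeg
      exact Finset.filter_subset_filter _ (Finset.erase_subset _ _)
    have hNemb : Nonempty ((↥N) ↪ Fin k) := by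
      apply Function.Embedding.nonempty_of_card_le
      rwa [Fintype.card_coe, Fintype.card_fin]
    obtain ⟨g⟩ := hNemb
    set f : Fin k → SimpleGraph V := fun i =>
      f' i ⊔ (if h : ∃ w : ↥N, g w = i then
        SimpleGraph.fromEdgeSet {s(x, (h.choose : V))} else ⊥) with hfdef
    have hxnotS' : x ∉ S' := Finset.notMem_erase _ _
    have hNS : ∀ w : ↥N, (w : V) ∈ S' ∧ H.Adj x w := by
      intro w
      exact Finset.mem_filter.mp w.2
    have hxF' : ∀ i w, ¬ (f' i).Adj x w := by
      intro i w hadj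
      exact hxnotS' ((hf'3 i x w hadj).1
      )
    have hnew_adj : ∀ i u v, (f i).Adj u v → (f' i).Adj u v ∨
        (∃ w : ↥N, g w = i ∧ (s(u,v) = s(x, (w : V)))) := by
      intro i u v hadj
      rw [hfdef] at hadj
      rcases hadj with h | h
      · exact Or.inl h
      · right
        split at h
        · next hex =>
          rw [fromEdgeSet_adj] at h
          exact ⟨hex.choose, hex.choose_spec, h.1⟩
        · simp at h
    refine ⟨f, fun i => ⟨?_, ?_⟩, ?_, ?_⟩
    · -- acyclic
      rw [hfdef]
      dsimp only
      split
      · next hex =>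
        refine isAcyclic_sup_pendant (hf'1 i).1 ?_ (hxF' i)
        have := (hNS hex.choose).1
        intro heq
        rw [← heq] at this
        exact hxnotS' this
      · rw [sup_bot_eq]; exact (hf'1 i).1
    · -- le H
      rw [hfdef]
      dsimp only
      refine sup_le (hf'1 i).2 ?_
      split
      · next hex =>
        intro u v huv
        rw [fromEdgeSet_adj, Set.mem_singleton_iff, Sym2.eq_iff] at huv
        rcases huv.1 with ⟨rfl, rfl⟩ | ⟨rfl, rfl⟩
        · exact (hNS hex.choose).2
        · exact (hNS hex.choose).2.symm
      · exact bot_le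
    · -- covering
      intro u v hadj huS hvS
      by_cases hu : u = x
      · subst hu
        have hvx : v ≠ u := fun h => (H.loopless.irrefl u) (h ▸ hadj)
        have hvN : v ∈ N := by
          rw [hNdef, Finset.mem_filter]
          exact ⟨Finset.mem_erase.mpr ⟨hvx, hvS⟩, hadj⟩
        refine ⟨g ⟨v, hvN⟩, ?_⟩
        rw [hfdef]
        dsimp only
        right
        have hex : ∃ w : ↥N, g w = g ⟨v, hvN⟩ := ⟨⟨v, hvN⟩, rfl⟩
        rw [dif_pos hex, fromEdgeSet_adj]
        have : hex.choose = ⟨v, hvN⟩ := g.injective hex.choose_spec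
        rw [this]
        exact ⟨rfl, fun h => (H.loopless.irrefl u) (h ▸ hadj)⟩
      by_cases hv : v = x
      · subst hv
        have huN : u ∈ N := by
          rw [hNdef, Finset.mem_filter]
          exact ⟨Finset.mem_erase.mpr ⟨hu, huS⟩, hadj.symm⟩
        refine ⟨g ⟨u, huN⟩, ?_⟩
        rw [hfdef]
        dsimp only
        right
        have hex : ∃ w : ↥N, g w = g ⟨u, huN⟩ := ⟨⟨u, huN⟩, rfl⟩
        rw [dif_pos hex, fromEdgeSet_adj]
        have : hex.choose = ⟨u, huN⟩ := g.injective hex.choose_spec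
        rw [this]
        exact ⟨Set.mem_singleton_iff.mpr Sym2.eq_swap, hu⟩
      · obtain ⟨i, hi⟩ := hf'2 u v hadj (Finset.mem_erase.mpr ⟨hu, huS⟩)
          (Finset.mem_erase.mpr ⟨hv, hvS⟩)
        exact ⟨i, by rw [hfdef]; exact Or.inl hi⟩
    · -- edges in S
      intro i u v hadj
      rcases hnew_adj i u v hadj with h | ⟨w, -, hw⟩
      · have := hf'3 i u v h
        exact ⟨Finset.mem_of_mem_erase this.1, Finset.mem_of_mem_erase this.2⟩
      · rw [Sym2.eq_iff] at hw
        rcases hw with ⟨rfl, rfl⟩ | ⟨rfl, rfl⟩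
        · exact ⟨hxS, Finset.mem_of_mem_erase (hNS w).1⟩
        · exact ⟨Finset.mem_of_mem_erase (hNS w).1, hxS⟩

def arbSet (G : SimpleGraph V) : Set ℕ :=
  { n : ℕ | ∃ f : Fin n → SimpleGraph V, (∀ i, (f i).IsAcyclic ∧ f i ≤ G) ∧
    ∀ e ∈ G.edgeSet, ∃ i, e ∈ (f i).edgeSet }

lemma mem_arbSet_of_elim [Fintype V] (H : SimpleGraph V) (k : ℕ)
    (hk : ∀ S : Finset V, S.Nonempty → ∃ x ∈ S, (S.filter (fun y => H.Adj x y)).card ≤ k) :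
    k ∈ arbSet H := by
  classical
  obtain ⟨f, hf1, hf2, -⟩ := forests_of_elim H k hk (Finset.univ.card) Finset.univ le_rfl
  refine ⟨f, hf1, ?_⟩
  intro e he
  induction e with
  | _ u v =>
    rw [mem_edgeSet] at he
    obtain ⟨i, hi⟩ := hf2 u v he (Finset.mem_univ u) (Finset.mem_univ v)
    exact ⟨i, (mem_edgeSet _).mpr hi⟩


section Orientation
variable [Fintype V] [LinearOrder V]

/-- Root of the component of `u` in `F`: minimal reachable vertex. -/
noncomputable def rootF (F : SimpleGraph V) (u : V) : V :=
  (Finset.univ.filter (fun w => F.Reachable u w)).min' ⟨u, Finset.mem_filter.mpr ⟨Finset.mem_univ u, Reachable.refl u⟩⟩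

lemma rootF_reachable (F : SimpleGraph V) (u : V) : F.Reachable u (rootF F u) := by
  have := Finset.min'_mem (Finset.univ.filter (fun w => F.Reachable u w))
    ⟨u, Finset.mem_filter.mpr ⟨Finset.mem_univ u, Reachable.refl u⟩⟩
  rw [Finset.mem_filter] at this
  exact this.2

lemma rootF_eq_of_reachable {F : SimpleGraph V} {u v : V} (h : F.Reachable u v) :
    rootF F u = rootF F v := by
  unfold rootF
  congr 1
  ext w
  simp only [Finset.mem_filter, Finset.mem_univ, true_and]
  exact ⟨fun hw => h.symm.trans hw, fun hw => h.trans hw⟩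

/-- On a shortest path to `r`, every vertex other than the start is strictly closer to `r`. -/
lemma dist_lt_of_mem_support_ne {F : SimpleGraph V} {v r w : V} {q : F.Walk v r}
    (hq : q.IsPath) (hlen : q.length = F.dist v r) (hw : w ∈ q.support) (hne : w ≠ v) :
    F.dist w r < F.dist v r := by
  have hdrop := F.dist_le (q.dropUntil w hw)
  have hspec := q.take_spec hw
  have hlen2 : (q.takeUntil w hw).length + (q.dropUntil w hw).length = q.length := by
    have := congrArg Walk.length hspec
    rwa [Walk.length_append] at this
  have htake : 0 < (q.takeUntil w hw).length := by
    by_contra h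
    push_neg at h
    interval_cases htl : (q.takeUntil w hw).length
    · exact hne (Walk.eq_of_length_eq_zero htl).symm
  omega

lemma dist_root_ne_of_adj {F : SimpleGraph V} (hF : F.IsAcyclic) {u v r : V}
    (hr : F.Reachable u r) (hadj : F.Adj u v) : F.dist u r ≠ F.dist v r := by
  intro heq
  have hrv : F.Reachable v r := hadj.symm.reachable.trans hr
  by_cases h0 : F.dist u r = 0
  · have hu : u = r := (hr.dist_eq_zero_iff).mp h0
    have hv : v = r := (hrv.dist_eq_zero_iff).mp (by omega)
    exact hadj.ne (hu.trans hv.symm)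
  obtain ⟨pu, hpu, hpulen⟩ := hr.exists_path_of_dist
  obtain ⟨pv, hpv, hpvlen⟩ := hrv.exists_path_of_dist
  have hunot : u ∉ pv.support := by
    intro hmem
    by_cases huv : u = v
    · exact hadj.ne huv
    · have := dist_lt_of_mem_support_ne hpv hpvlen hmem huv
      omega
  have hp2 : (Walk.cons hadj pv).IsPath := hpv.cons hunot
  have := hF.path_unique ⟨pu, hpu⟩ ⟨Walk.cons hadj pv, hp2⟩
  have hlen := congrArg (fun (P : F.Path u r) => (P : F.Walk u r).length) this
  simp only [Walk.length_cons] at hlen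
  omega

lemma parent_unique {F : SimpleGraph V} (hF : F.IsAcyclic) {u v₁ v₂ r : V}
    (hr : F.Reachable u r) (h1 : F.Adj u v₁) (h2 : F.Adj u v₂)
    (hd1 : F.dist v₁ r < F.dist u r) (hd2 : F.dist v₂ r < F.dist u r) : v₁ = v₂ := by
  have hrv1 : F.Reachable v₁ r := h1.symm.reachable.trans hr
  have hrv2 : F.Reachable v₂ r := h2.symm.reachable.trans hr
  obtain ⟨p1, hp1, hl1⟩ := hrv1.exists_path_of_dist
  obtain ⟨p2, hp2, hl2⟩ := hrv2.exists_path_of_dist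
  have hun1 : u ∉ p1.support := by
    intro hmem
    by_cases huv : u = v₁
    · exact (h1.ne huv).elim
    · have := dist_lt_of_mem_support_ne hp1 hl1 hmem huv; omega
  have hun2 : u ∉ p2.support := by
    intro hmem
    by_cases huv : u = v₂
    · exact (h2.ne huv).elim
    · have := dist_lt_of_mem_support_ne hp2 hl2 hmem huv; omega
  have := hF.path_unique ⟨Walk.cons h1 p1, hp1.cons hun1⟩ ⟨Walk.cons h2 p2, hp2.cons hun2⟩
  have hsup := congrArg (fun (P : F.Path u r) => (P : F.Walk u r).support) this
  simp only [Walk.support_cons] at hsup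
  have h1' : p1.support = v₁ :: p1.support.tail := p1.support_eq_cons
  have h2' : p2.support = v₂ :: p2.support.tail := p2.support_eq_cons
  rw [h1', h2'] at hsup
  exact ((List.cons_eq_cons.mp (List.cons_eq_cons.mp hsup).2).1)

end Orientation

/-- From a forest decomposition, an orientation with outdegree at most `a`. -/
lemma exists_orientation [Fintype V] (G : SimpleGraph V) (a : ℕ)
    (f : Fin a → SimpleGraph V) (hf : ∀ i, (f i).IsAcyclic ∧ f i ≤ G)
    (hcov : ∀ u v, G.Adj u v → ∃ i, (f i).Adj u v) :
    ∃ D : V → V → Prop, (∀ u v, G.Adj u v → D u v ∨ D v u) ∧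
      (∀ u, (Finset.univ.filter (fun v => G.Adj u v ∧ D u v)).card ≤ a) := by
  classical
  letI : LinearOrder V := LinearOrder.lift' (fun v => (Fintype.equivFin V v : ℕ))
    (fun x y h => (Fintype.equivFin V).injective (Fin.val_injective h))
  refine ⟨fun u v => ∃ i, (f i).Adj u v ∧
    (f i).dist v (rootF (f i) v) < (f i).dist u (rootF (f i) u), ?_, ?_⟩
  · intro u v hadj
    obtain ⟨i, hi⟩ := hcov u v hadj
    have hroot : rootF (f i) u = rootF (f i) v := rootF_eq_of_reachable hi.reachable
    have hne := dist_root_ne_of_adj (hf i).1 (rootF_reachable (f i) u) hi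
    rcases Nat.lt_or_ge ((f i).dist v (rootF (f i) u)) ((f i).dist u (rootF (f i) u)) with h | h
    · exact Or.inl ⟨i, hi, by rw [← hroot]; exact h⟩
    · refine Or.inr ⟨i, hi.symm, ?_⟩
      rw [rootF_eq_of_reachable hi.symm.reachable]
      omega
  · intro u
    refine le_trans (Finset.card_le_card (?_ : _ ⊆ Finset.univ.biUnion
        (fun i : Fin a => Finset.univ.filter (fun v => (f i).Adj u v ∧
          (f i).dist v (rootF (f i) u) < (f i).dist u (rootF (f i) u)))))
      (le_trans Finset.card_biUnion_le ?_)
    · intro v hv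
      simp only [Finset.mem_filter, Finset.mem_univ, true_and] at hv
      obtain ⟨-, i, hadj, hlt⟩ := hv
      refine Finset.mem_biUnion.mpr ⟨i, Finset.mem_univ i, ?_⟩
      rw [Finset.mem_filter]
      rw [← rootF_eq_of_reachable hadj.reachable] at hlt
      exact ⟨Finset.mem_univ v, hadj, hlt⟩
    · have : ∀ i : Fin a, (Finset.univ.filter (fun v => (f i).Adj u v ∧
          (f i).dist v (rootF (f i) u) < (f i).dist u (rootF (f i) u))).card ≤ 1 := by
        intro i
        rw [Finset.card_le_one]
        intro v₁ hv₁ v₂ hv₂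
        rw [Finset.mem_filter] at hv₁ hv₂
        exact parent_unique (hf i).1 (rootF_reachable (f i) u) hv₁.2.1 hv₂.2.1 hv₁.2.2 hv₂.2.2
      calc ∑ i : Fin a, _ ≤ ∑ i : Fin a, 1 := Finset.sum_le_sum (fun i _ => this i)
      _ = a := by simp


section Count
variable [Fintype V] (G : SimpleGraph V) (D : V → V → Prop) (ord : V → ℕ)

noncomputable def stepF (x : V) (b : Bool) : Finset V :=
  if b then Finset.univ.filter (fun v => G.Adj x v ∧ D x v)
  else Finset.univ.filter (fun v => G.Adj x v)

noncomputable def reachF : V → List Bool → Finset V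
  | x, [] => {x}
  | x, b :: t => (stepF G D x b).biUnion (fun v => reachF v t)

lemma count_tf (l : List Bool) : l.count true + l.count false = l.length := by
  induction l with
  | nil => simp
  | cons b t ih => cases b <;> simp [List.count_cons] <;> omega

lemma count_true_map_not (l : List Bool) : (l.map not).count true = l.count false := by
  induction l with
  | nil => simp
  | cons b t ih => cases b <;> simp [List.count_cons, ih]

lemma card_reachF_le (a Δ : ℕ)
    (ha : ∀ u, (Finset.univ.filter (fun v => G.Adj u v ∧ D u v)).card ≤ a)
    (hΔ : ∀ u, (Finset.univ.filter (fun v => G.Adj u v)).card ≤ Δ) :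
    ∀ (s : List Bool) (x : V),
      (reachF G D x s).card ≤ a ^ (s.count true) * Δ ^ (s.count false) := by
  intro s
  induction s with
  | nil => intro x; simp [reachF]
  | cons b t ih =>
    intro x
    have hstep : (stepF G D x b).card ≤ (if b then a else Δ) := by
      cases b
      · simpa [stepF] using hΔ x
      · simpa [stepF] using ha x
    calc (reachF G D x (b :: t)).card
        ≤ ∑ v ∈ stepF G D x b, (reachF G D v t).card := Finset.card_biUnion_le
      _ ≤ ∑ _v ∈ stepF G D x b, a ^ (t.count true) * Δ ^ (t.count false) :=
          Finset.sum_le_sum (fun v _ => ih v)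
      _ = (stepF G D x b).card * (a ^ (t.count true) * Δ ^ (t.count false)) := by
          rw [Finset.sum_const, smul_eq_mul]
      _ ≤ (if b then a else Δ) * (a ^ (t.count true) * Δ ^ (t.count false)) :=
          Nat.mul_le_mul_right _ hstep
      _ ≤ a ^ ((b :: t).count true) * Δ ^ ((b :: t).count false) := by
          cases b <;> simp [List.count_cons, pow_succ] <;> ring_nf <;> omega

noncomputable def patt : ∀ (x y : V), G.Walk x y → List Bool
  | _, _, Walk.nil => []
  | x, y, @Walk.cons _ _ _ w _ h q =>
      (if D x w then true else false) :: patt w y q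

@[simp] lemma patt_nil (x : V) : patt G D x x Walk.nil = [] := rfl

@[simp] lemma patt_cons {x w y : V} (h : G.Adj x w) (q : G.Walk w y) :
    patt G D x y (Walk.cons h q) = (if D x w then true else false) :: patt G D w y q := rfl

lemma length_patt {x y : V} (p : G.Walk x y) : (patt G D x y p).length = p.length := by
  induction p with
  | nil => simp
  | cons h q ih => simp [ih]

lemma patt_append {x y z : V} (p : G.Walk x y) (q : G.Walk y z) :
    patt G D x z (p.append q) = patt G D x y p ++ patt G D y z q := by
  induction p with
  | nil => simp [Walk.nil_append]
  | cons h r ih => simp [Walk.cons_append, ih]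

lemma length_le_count_true_add (hD : ∀ u v, G.Adj u v → D u v ∨ D v u) {x y : V}
    (p : G.Walk x y) :
    p.length ≤ (patt G D x y p).count true + (patt G D y x p.reverse).count true := by
  induction p with
  | nil => simp
  | @cons x w y h q ih =>
    rw [Walk.reverse_cons, patt_append, List.count_append, patt_cons, List.count_cons,
      Walk.length_cons]
    have h2 : (patt G D w x (Walk.cons h.symm Walk.nil)) = [if D w x then true else false] := rfl
    rw [h2]
    rcases hD x w h with h' | h' <;> by_cases h'' : D x w <;>
      simp [h', h'', List.count_cons] <;> omega

lemma mem_reachF {x y : V} (p : G.Walk x y) : y ∈ reachF G D x (patt G D x y p) := by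
  induction p with
  | nil => simp [reachF]
  | @cons x w y h q ih =>
    rw [patt_cons]
    show y ∈ (stepF G D x _).biUnion _
    refine Finset.mem_biUnion.mpr ⟨w, ?_, ih⟩
    by_cases hd : D x w
    · simp [stepF, hd, h]
    · simp [stepF, hd, h]

noncomputable def cW (x y : V) (h : G.Reachable x y) : G.Walk x y :=
  if ord x ≤ ord y then h.exists_walk_length_eq_dist.choose
  else (h.symm.exists_walk_length_eq_dist.choose).reverse

lemma length_cW (x y : V) (h : G.Reachable x y) : (cW G ord x y h).length = G.dist x y := by
  unfold cW
  split
  · exact h.exists_walk_length_eq_dist.choose_spec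
  · rw [Walk.length_reverse, h.symm.exists_walk_length_eq_dist.choose_spec, dist_comm]

lemma cW_reverse (hord : Function.Injective ord) (x y : V) (hxy : x ≠ y) (h : G.Reachable x y) :
    cW G ord y x h.symm = (cW G ord x y h).reverse := by
  have hne : ord x ≠ ord y := fun e => hxy (hord e)
  unfold cW
  by_cases hle : ord x ≤ ord y
  · rw [if_pos hle, if_neg (by omega)]
  · rw [if_neg hle, if_pos (by omega), Walk.reverse_reverse]

noncomputable def w2 (x y : V) : ℕ :=
  if h : G.Reachable x y ∧ x ≠ y then
    (if G.dist x y ≤ 2 * ((patt G D x y (cW G ord x y h.1)).count true) then 1 else 0) +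
    (if G.dist x y < 2 * ((patt G D x y (cW G ord x y h.1)).count true) then 1 else 0)
  else 0

lemma two_le_w2_add (hord : Function.Injective ord)
    (hD : ∀ u v, G.Adj u v → D u v ∨ D v u) (x y : V)
    (hr : G.Reachable x y) (hne : x ≠ y) :
    2 ≤ w2 G D ord x y + w2 G D ord y x := by
  rw [w2, w2, dif_pos ⟨hr, hne⟩, dif_pos ⟨hr.symm, hne.symm⟩]
  have hrev : cW G ord y x hr.symm = (cW G ord x y hr).reverse := cW_reverse G ord hord x y hne hr
  have hsum : G.dist x y ≤ ((patt G D x y (cW G ord x y hr)).count true) +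
      ((patt G D y x (cW G ord y x hr.symm)).count true) := by
    rw [hrev]
    have := length_le_count_true_add G D hD (cW G ord x y hr)
    rwa [length_cW] at this
  rw [dist_comm (u := y)]
  split_ifs <;> omega

end Count


/-- weight of a pattern count. -/
def wS (ℓ k : ℕ) : ℕ := (if ℓ ≤ 2 * k then 1 else 0) + (if ℓ < 2 * k then 1 else 0)

lemma wS_add_compl {ℓ k : ℕ} (hk : k ≤ ℓ) : wS ℓ k + wS ℓ (ℓ - k) = 2 := by
  unfold wS; split_ifs <;> omega

lemma sum_wS (ℓ : ℕ) : ∑ g : Fin ℓ → Bool, wS ℓ ((List.ofFn g).count true) = 2 ^ ℓ := by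
  classical
  set F : (Fin ℓ → Bool) → ℕ := fun g => wS ℓ ((List.ofFn g).count true) with hF
  let e : (Fin ℓ → Bool) ≃ (Fin ℓ → Bool) :=
    ⟨fun g i => !(g i), fun g i => !(g i), fun g => by funext i; simp,
      fun g => by funext i; simp⟩
  have hcomp : ∑ g, F (e g) = ∑ g, F g := Equiv.sum_comp e F
  have hpair : ∀ g : Fin ℓ → Bool, F g + F (e g) = 2 := by
    intro g
    have hcnt : (List.ofFn (fun i => !(g i))).count true = ℓ - (List.ofFn g).count true := by
      have h1 : List.ofFn (fun i => !(g i)) = (List.ofFn g).map not := by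
        rw [List.map_ofFn]; rfl
      rw [h1, count_true_map_not]
      have := count_tf (List.ofFn g)
      have hlen : (List.ofFn g).length = ℓ := List.length_ofFn
      omega
    have hle : (List.ofFn g).count true ≤ ℓ := by
      have h2 := count_tf (List.ofFn g)
      have hlen : (List.ofFn g).length = ℓ := List.length_ofFn
      omega
    have hegg : e g = fun i => !(g i) := rfl
    show wS ℓ ((List.ofFn g).count true) + wS ℓ ((List.ofFn (e g)).count true) = 2
    rw [hegg, hcnt]
    exact wS_add_compl hle
  have h2 : 2 * ∑ g, F g = 2 * 2 ^ ℓ := by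
    have hsum : (∑ g, F g) + (∑ g, F (e g)) = ∑ g : Fin ℓ → Bool, 2 := by
      rw [← Finset.sum_add_distrib]
      exact Finset.sum_congr rfl (fun g _ => hpair g)
    rw [hcomp] at hsum
    have hcard : (Finset.univ : Finset (Fin ℓ → Bool)).card = 2 ^ ℓ := by
      rw [Finset.card_univ, Fintype.card_fun]
      simp
    rw [Finset.sum_const, hcard, smul_eq_mul] at hsum
    omega
  have hfin := Nat.eq_of_mul_eq_mul_left (show 0 < 2 by norm_num) h2
  simpa [hF] using hfin

lemma pow_bound {a Δ p ℓ k : ℕ} (ha1 : 1 ≤ a) (haΔ : a ≤ Δ) (hℓp : ℓ ≤ p) (hkℓ : k ≤ ℓ)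
    (h2k : ℓ ≤ 2 * k) : a ^ k * Δ ^ (ℓ - k) ≤ a ^ ((p + 1) / 2) * Δ ^ (p / 2) := by
  have hΔ1 : 1 ≤ Δ := le_trans ha1 haΔ
  set c := (ℓ + 1) / 2 with hc
  have hck : c ≤ k := by omega
  have h1 : a ^ k = a ^ c * a ^ (k - c) := by rw [← pow_add]; congr 1; omega
  have h2 : a ^ (k - c) ≤ Δ ^ (k - c) := Nat.pow_le_pow_left haΔ _
  have h3 : a ^ k * Δ ^ (ℓ - k) ≤ a ^ c * Δ ^ (ℓ - c) := by
    calc a ^ k * Δ ^ (ℓ - k) = a ^ c * (a ^ (k - c) * Δ ^ (ℓ - k)) := by rw [h1]; ring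
      _ ≤ a ^ c * (Δ ^ (k - c) * Δ ^ (ℓ - k)) :=
        Nat.mul_le_mul_left _ (Nat.mul_le_mul_right _ h2)
      _ = a ^ c * Δ ^ (ℓ - c) := by rw [← pow_add]; congr 2; omega
  refine le_trans h3 (Nat.mul_le_mul ?_ ?_)
  · exact Nat.pow_le_pow_right ha1 (by omega)
  · exact Nat.pow_le_pow_right hΔ1 (by omega)

lemma geom_sum_Icc (p : ℕ) : ∑ ℓ ∈ Finset.Icc 1 p, 2 ^ ℓ = 2 ^ (p + 1) - 2 := by
  induction p with
  | zero => simp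
  | succ n ih =>
    rw [Finset.sum_Icc_succ_top (by omega), ih]
    have h1 : 2 ≤ 2 ^ (n + 1) := by
      have := Nat.one_le_two_pow (n := n)
      calc 2 = 2 * 1 := by ring
        _ ≤ 2 * 2 ^ n := by omega
        _ = 2 ^ (n + 1) := by rw [pow_succ]; ring
    rw [pow_succ (n := n + 1)]
    omega

lemma inner_sum_le [Fintype V] (G : SimpleGraph V) (D : V → V → Prop) (ord : V → ℕ)
    (a Δ p ℓ : ℕ) (ha1 : 1 ≤ a) (haΔ : a ≤ Δ)
    (ha : ∀ u, (Finset.univ.filter (fun v => G.Adj u v ∧ D u v)).card ≤ a)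
    (hΔ : ∀ u, (Finset.univ.filter (fun v => G.Adj u v)).card ≤ Δ)
    (hℓp : ℓ ≤ p) (x : V) (T : Finset V)
    (hT : ∀ y ∈ T, G.Reachable x y ∧ x ≠ y ∧ G.dist x y = ℓ) :
    ∑ y ∈ T, w2 G D ord x y ≤ 2 ^ ℓ * (a ^ ((p + 1) / 2) * Δ ^ (p / 2)) := by
  classical
  set A := a ^ ((p + 1) / 2) * Δ ^ (p / 2) with hA
  set Φ : (Fin ℓ → Bool) → V → ℕ := fun g y =>
    if y ∈ reachF G D x (List.ofFn g) then wS ℓ ((List.ofFn g).count true) else 0 with hΦ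
  have key : ∀ y ∈ T, w2 G D ord x y ≤ ∑ g : Fin ℓ → Bool, Φ g y := by
    intro y hy
    obtain ⟨hr, hne, hdist⟩ := hT y hy
    have hcond : G.Reachable x y ∧ x ≠ y := ⟨hr, hne⟩
    rw [w2, dif_pos hcond]
    set s := patt G D x y (cW G ord x y hcond.1) with hs
    have hslen : s.length = ℓ := by rw [hs, length_patt, length_cW, hdist]
    set gy : Fin ℓ → Bool := fun i => s.get (Fin.cast hslen.symm i) with hgy
    have hofn : List.ofFn gy = s := by
      apply List.ext_getElem
      · rw [List.length_ofFn, hslen]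
      · intro n h1 h2
        rw [List.getElem_ofFn]
        rfl
    have hmem : y ∈ reachF G D x (List.ofFn gy) := by
      rw [hofn]; exact mem_reachF G D _
    have hsingle := Finset.single_le_sum (f := fun g : Fin ℓ → Bool => Φ g y)
      (fun g _ => Nat.zero_le _) (Finset.mem_univ gy)
    rw [hΦ] at hsingle
    simp only [if_pos hmem, hofn] at hsingle
    have hmem2 : y ∈ reachF G D x s := hofn ▸ hmem
    refine le_trans (le_of_eq ?_) hsingle
    rw [if_pos hmem2, wS, hdist]
  have step2 : ∑ y ∈ T, w2 G D ord x y ≤ ∑ g : Fin ℓ → Bool, ∑ y : V, Φ g y := by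
    calc ∑ y ∈ T, w2 G D ord x y ≤ ∑ y ∈ T, ∑ g : Fin ℓ → Bool, Φ g y :=
        Finset.sum_le_sum key
      _ ≤ ∑ y : V, ∑ g : Fin ℓ → Bool, Φ g y :=
        Finset.sum_le_sum_of_subset_of_nonneg (Finset.subset_univ T)
          (fun _ _ _ => Nat.zero_le _)
      _ = ∑ g : Fin ℓ → Bool, ∑ y : V, Φ g y := Finset.sum_comm
  have step3 : ∀ g : Fin ℓ → Bool,
      ∑ y : V, Φ g y = wS ℓ ((List.ofFn g).count true) * (reachF G D x (List.ofFn g)).card := by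
    intro g
    rw [hΦ]
    simp only []
    rw [Finset.sum_ite_mem, Finset.univ_inter, Finset.sum_const, smul_eq_mul, mul_comm]
  have step4 : ∀ g : Fin ℓ → Bool,
      wS ℓ ((List.ofFn g).count true) * (reachF G D x (List.ofFn g)).card ≤
      wS ℓ ((List.ofFn g).count true) * A := by
    intro g
    set k := (List.ofFn g).count true with hk
    by_cases h2k : ℓ ≤ 2 * k
    · refine Nat.mul_le_mul_left _ ?_
      have hlen : (List.ofFn g).length = ℓ := List.length_ofFn
      have htf := count_tf (List.ofFn g)
      have hcf : (List.ofFn g).count false = ℓ - k := by omega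
      have hcard := card_reachF_le G D a Δ ha hΔ (List.ofFn g) x
      rw [hcf, ← hk] at hcard
      exact le_trans hcard (pow_bound ha1 haΔ hℓp (by omega) h2k)
    · have hz : wS ℓ k = 0 := by unfold wS; split_ifs <;> omega
      rw [hz]; simp
  calc ∑ y ∈ T, w2 G D ord x y ≤ ∑ g : Fin ℓ → Bool, ∑ y : V, Φ g y := step2
    _ = ∑ g : Fin ℓ → Bool, wS ℓ ((List.ofFn g).count true) * (reachF G D x (List.ofFn g)).card :=
      Finset.sum_congr rfl (fun g _ => step3 g)
    _ ≤ ∑ g : Fin ℓ → Bool, wS ℓ ((List.ofFn g).count true) * A :=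
      Finset.sum_le_sum (fun g _ => step4 g)
    _ = (∑ g : Fin ℓ → Bool, wS ℓ ((List.ofFn g).count true)) * A := by
      rw [Finset.sum_mul]
    _ = 2 ^ ℓ * A := by rw [sum_wS]

lemma sum_w2_le [Fintype V] (G : SimpleGraph V) (D : V → V → Prop) (ord : V → ℕ)
    (a Δ p : ℕ) (ha1 : 1 ≤ a) (haΔ : a ≤ Δ)
    (ha : ∀ u, (Finset.univ.filter (fun v => G.Adj u v ∧ D u v)).card ≤ a)
    (hΔ : ∀ u, (Finset.univ.filter (fun v => G.Adj u v)).card ≤ Δ) (x : V) :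
    ∑ y ∈ Finset.univ.filter (fun y => G.Reachable x y ∧ x ≠ y ∧ G.dist x y ≤ p),
      w2 G D ord x y ≤ (2 ^ (p + 1) - 2) * (a ^ ((p + 1) / 2) * Δ ^ (p / 2)) := by
  classical
  set S0 := Finset.univ.filter (fun y => G.Reachable x y ∧ x ≠ y ∧ G.dist x y ≤ p) with hS0
  have hmaps : ∀ y ∈ S0, G.dist x y ∈ Finset.Icc 1 p := by
    intro y hy
    rw [hS0, Finset.mem_filter] at hy
    obtain ⟨-, hr, hne, hd⟩ := hy
    rw [Finset.mem_Icc]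
    exact ⟨hr.pos_dist_of_ne hne, hd⟩
  rw [← Finset.sum_fiberwise_of_maps_to hmaps (w2 G D ord x)]
  calc ∑ ℓ ∈ Finset.Icc 1 p, ∑ y ∈ S0.filter (fun y => G.dist x y = ℓ), w2 G D ord x y
      ≤ ∑ ℓ ∈ Finset.Icc 1 p, 2 ^ ℓ * (a ^ ((p + 1) / 2) * Δ ^ (p / 2)) := by
        refine Finset.sum_le_sum (fun ℓ hℓ => ?_)
        rw [Finset.mem_Icc] at hℓ
        refine inner_sum_le G D ord a Δ p ℓ ha1 haΔ ha hΔ hℓ.2 x _ (fun y hy => ?_)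
        rw [Finset.mem_filter, hS0, Finset.mem_filter] at hy
        exact ⟨hy.1.2.1, hy.1.2.2.1, hy.2⟩
    _ = (∑ ℓ ∈ Finset.Icc 1 p, 2 ^ ℓ) * (a ^ ((p + 1) / 2) * Δ ^ (p / 2)) := by
        rw [Finset.sum_mul]
    _ = (2 ^ (p + 1) - 2) * (a ^ ((p + 1) / 2) * Δ ^ (p / 2)) := by rw [geom_sum_Icc]

end Arb12

/-- For all integers p ≥ 1 and Δ ≥ 1 and every finite simple graph G with maximum
degree at most Δ, arb(G^p) ≤ 2^{p+1} · arb(G)^{⌈p/2⌉} · Δ^{⌊p/2⌋}. -/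
theorem stmt12 {V : Type*} [Fintype V] (G : SimpleGraph V) (p Δ : ℕ) (hp : 1 ≤ p) (hΔ : 1 ≤ Δ)
    (hdeg : ∀ v : V, (G.neighborSet v).ncard ≤ Δ) :
    arb (graphPow G p) ≤ 2 ^ (p + 1) * arb G ^ ((p + 1) / 2) * Δ ^ (p / 2) := by
  classical
  open Arb12 in
  set a := arb G with ha_def
  have hΔfilter : ∀ u : V, (Finset.univ.filter (fun v => G.Adj u v)).card ≤ Δ := by
    intro u
    have he : Finset.univ.filter (fun v => G.Adj u v) = (G.neighborSet u).toFinset := by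
      ext v; simp
    rw [he, ← Set.ncard_eq_toFinset_card']
    exact hdeg u
  have hGmem : Δ ∈ Arb12.arbSet G := by
    refine Arb12.mem_arbSet_of_elim G Δ (fun S hS => ?_)
    obtain ⟨x, hx⟩ := hS
    refine ⟨x, hx, ?_⟩
    refine le_trans (Finset.card_le_card
      (Finset.filter_subset_filter _ (Finset.subset_univ S))) (hΔfilter x)
  have hane : (Arb12.arbSet G).Nonempty := ⟨Δ, hGmem⟩
  have hamem : a ∈ Arb12.arbSet G := Nat.sInf_mem hane
  have haΔ : a ≤ Δ := Nat.sInf_le hGmem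
  obtain ⟨f, hf, hcov⟩ := hamem
  rcases Nat.eq_zero_or_pos a with ha0 | ha1
  · -- G has no edges, so does its power
    have hnoadj : ∀ u v : V, ¬ G.Adj u v := by
      intro u v h
      obtain ⟨i, -⟩ := hcov s(u, v) ((SimpleGraph.mem_edgeSet G).mpr h)
      have := i.isLt
      omega
    have hreach : ∀ u v : V, G.Reachable u v → u = v := by
      intro u v h
      obtain ⟨w⟩ := h
      cases w with
      | nil => rfl
      | cons h q => exact absurd h (hnoadj _ _)
    have h0mem : 0 ∈ Arb12.arbSet (graphPow G p) := by
      refine ⟨Fin.elim0, fun i => i.elim0, fun e he => ?_⟩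
      exfalso
      induction e with
      | _ u v =>
        rw [SimpleGraph.mem_edgeSet] at he
        exact he.1 (hreach u v he.2.1)
    exact le_trans (Nat.sInf_le h0mem) (Nat.zero_le _)
  · -- main case
    have hcov' : ∀ u v, G.Adj u v → ∃ i, (f i).Adj u v := by
      intro u v h
      obtain ⟨i, hi⟩ := hcov s(u, v) ((SimpleGraph.mem_edgeSet G).mpr h)
      exact ⟨i, (SimpleGraph.mem_edgeSet (f i)).mp hi⟩
    obtain ⟨D, hDtot, hDout⟩ := Arb12.exists_orientation G a f hf hcov'
    set ord : V → ℕ := fun v => ((Fintype.equivFin V) v : ℕ) with hord_def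
    have hord : Function.Injective ord := by
      intro x y h
      exact (Fintype.equivFin V).injective (Fin.val_injective h)
    set A := a ^ ((p + 1) / 2) * Δ ^ (p / 2) with hA
    set K := 2 ^ (p + 1) * a ^ ((p + 1) / 2) * Δ ^ (p / 2) with hK
    have hKA : K = 2 ^ (p + 1) * A := by rw [hK, hA]; ring
    set Gp := graphPow G p with hGp
    have hGpadj : ∀ x y, Gp.Adj x y ↔ (x ≠ y ∧ G.Reachable x y ∧ G.dist x y ≤ p) :=
      fun x y => Iff.rfl
    have hk : ∀ S : Finset V, S.Nonempty →
        ∃ x ∈ S, (S.filter (fun y => Gp.Adj x y)).card ≤ K := by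
      intro S hS
      by_contra hcon
      push_neg at hcon
      have hlow : (K + 1) * S.card ≤ ∑ x ∈ S, (S.filter (fun y => Gp.Adj x y)).card := by
        calc (K + 1) * S.card = ∑ _x ∈ S, (K + 1) := by
              rw [Finset.sum_const, smul_eq_mul]; ring
          _ ≤ ∑ x ∈ S, (S.filter (fun y => Gp.Adj x y)).card :=
              Finset.sum_le_sum (fun x hx => hcon x hx)
      set T := ∑ x ∈ S, (S.filter (fun y => Gp.Adj x y)).card with hT
      have hstep1 : 2 * T ≤ ∑ x ∈ S, ∑ y ∈ S,
          (if Gp.Adj x y then Arb12.w2 G D ord x y + Arb12.w2 G D ord y x else 0) := by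
        rw [hT, Finset.mul_sum]
        refine Finset.sum_le_sum (fun x hx => ?_)
        rw [Finset.card_eq_sum_ones, Finset.sum_filter, Finset.mul_sum]
        refine Finset.sum_le_sum (fun y hy => ?_)
        by_cases hadj : Gp.Adj x y
        · rw [if_pos hadj, if_pos hadj]
          obtain ⟨hne, hr, -⟩ := hadj
          have := Arb12.two_le_w2_add G D ord hord hDtot x y hr hne
          omega
        · rw [if_neg hadj, if_neg hadj]
          omega
      have hsplit : ∑ x ∈ S, ∑ y ∈ S,
          (if Gp.Adj x y then Arb12.w2 G D ord x y + Arb12.w2 G D ord y x else 0) ≤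
          2 * ∑ x ∈ S, ∑ y ∈ S, (if Gp.Adj x y then Arb12.w2 G D ord x y else 0) := by
        refine le_of_eq ?_
        have hsym : ∑ x ∈ S, ∑ y ∈ S, (if Gp.Adj x y then Arb12.w2 G D ord y x else 0) =
            ∑ x ∈ S, ∑ y ∈ S, (if Gp.Adj x y then Arb12.w2 G D ord x y else 0) := by
          rw [Finset.sum_comm]
          refine Finset.sum_congr rfl (fun x _ => Finset.sum_congr rfl (fun y _ => ?_))
          congr 1
          exact propext (Gp.adj_comm y x)
        calc ∑ x ∈ S, ∑ y ∈ S,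
            (if Gp.Adj x y then Arb12.w2 G D ord x y + Arb12.w2 G D ord y x else 0)
            = (∑ x ∈ S, ∑ y ∈ S, (if Gp.Adj x y then Arb12.w2 G D ord x y else 0)) +
              (∑ x ∈ S, ∑ y ∈ S, (if Gp.Adj x y then Arb12.w2 G D ord y x else 0)) := by
              rw [← Finset.sum_add_distrib]
              refine Finset.sum_congr rfl (fun x _ => ?_)
              rw [← Finset.sum_add_distrib]
              refine Finset.sum_congr rfl (fun y _ => ?_)
              split_ifs <;> omega
          _ = 2 * ∑ x ∈ S, ∑ y ∈ S, (if Gp.Adj x y then Arb12.w2 G D ord x y else 0) := by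
              rw [hsym]; ring
      have hup : ∀ x : V, ∑ y ∈ S, (if Gp.Adj x y then Arb12.w2 G D ord x y else 0) ≤
          (2 ^ (p + 1) - 2) * A := by
        intro x
        have hsub : S.filter (fun y => Gp.Adj x y) ⊆
            Finset.univ.filter (fun y => G.Reachable x y ∧ x ≠ y ∧ G.dist x y ≤ p) := by
          intro y hy
          rw [Finset.mem_filter] at hy ⊢
          obtain ⟨-, hne, hr, hd⟩ := hy
          exact ⟨Finset.mem_univ y, hr, hne, hd⟩
        calc ∑ y ∈ S, (if Gp.Adj x y then Arb12.w2 G D ord x y else 0)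
            = ∑ y ∈ S.filter (fun y => Gp.Adj x y), Arb12.w2 G D ord x y := by
              rw [Finset.sum_filter]
          _ ≤ ∑ y ∈ Finset.univ.filter
                (fun y => G.Reachable x y ∧ x ≠ y ∧ G.dist x y ≤ p), Arb12.w2 G D ord x y :=
              Finset.sum_le_sum_of_subset_of_nonneg hsub (fun _ _ _ => Nat.zero_le _)
          _ ≤ (2 ^ (p + 1) - 2) * (a ^ ((p + 1) / 2) * Δ ^ (p / 2)) :=
              Arb12.sum_w2_le G D ord a Δ p ha1 haΔ hDout hΔfilter x
      have hfinal : 2 * ((K + 1) * S.card) ≤ 2 * (S.card * ((2 ^ (p + 1) - 2) * A)) := by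
        calc 2 * ((K + 1) * S.card) ≤ 2 * T := by omega
          _ ≤ 2 * ∑ x ∈ S, ∑ y ∈ S, (if Gp.Adj x y then Arb12.w2 G D ord x y else 0) :=
              le_trans hstep1 hsplit
          _ ≤ 2 * ∑ _x ∈ S, (2 ^ (p + 1) - 2) * A := by
              have := Finset.sum_le_sum (fun x (_ : x ∈ S) => hup x)
              omega
          _ = 2 * (S.card * ((2 ^ (p + 1) - 2) * A)) := by
              rw [Finset.sum_const, smul_eq_mul]
      have hcard1 : 1 ≤ S.card := Finset.card_pos.mpr hS
      have hbound : (2 ^ (p + 1) - 2) * A ≤ K := by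
        rw [hKA]
        exact Nat.mul_le_mul_right _ (Nat.sub_le _ _)
      have : (K + 1) * S.card ≤ K * S.card := by
        calc (K + 1) * S.card ≤ S.card * ((2 ^ (p + 1) - 2) * A) := by omega
          _ ≤ S.card * K := Nat.mul_le_mul_left _ hbound
          _ = K * S.card := Nat.mul_comm _ _
      have := Nat.le_of_mul_le_mul_right this hcard1
      omega
    exact Nat.sInf_le (Arb12.mem_arbSet_of_elim Gp K hk)
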